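/- Let K be a field of characteristic different from 2, V a K-vector space of finite dimension m, Q a quadratic form on V with polar bilinear form B, and (b_1, …, b_m) a basis of V which is orthogonal for B (i.e. B(b_i,b_j) = 0 for i ≠ j). Then the 2^m elements ι_Q(b_{i_1})·ι_Q(b_{i_2})⋯ι_Q(b_{i_k}), taken over all subsets {i_1 < i_2 < … < i_k} of {1,…,m} (the empty product being 1), form a basis of the Clifford algebra Cl(V,Q) as a K-vector space; in particular Cl(V,Q) has dimension 2^m, equal to that of the exterior algebra ΛV. -/

import Mathlib

noncomputable section

open CliffordAlgebra Finsupp Finset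

namespace CliffAux

variable (K : Type) [Field K] {V : Type} [AddCommGroup V] [Module K V] {m : ℕ}

/-- sign: (-1) to the number of elements of `s` below `i`. -/
def sgn (i : Fin m) (s : Finset (Fin m)) : K :=
  (-1) ^ (s.filter (fun j => j < i)).card

variable {K}

lemma sgn_mul_self (i : Fin m) (s : Finset (Fin m)) : sgn K i s * sgn K i s = 1 := by
  rw [sgn, ← mul_pow]; norm_num

lemma sgn_insert_of_not_lt {i j : Fin m} (h : ¬ j < i) (s : Finset (Fin m)) :
    sgn K i (insert j s) = sgn K i s := by
  unfold sgn
  rw [Finset.filter_insert, if_neg h]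

lemma sgn_insert_of_lt {i j : Fin m} (h : j < i) {s : Finset (Fin m)} (hj : j ∉ s) :
    sgn K i (insert j s) = - sgn K i s := by
  unfold sgn
  rw [Finset.filter_insert, if_pos h,
    Finset.card_insert_of_notMem (by simp [hj]), pow_succ]
  ring

lemma filter_erase_eq {i j : Fin m} (h : ¬ j < i) (s : Finset (Fin m)) :
    (s.erase j).filter (fun k => k < i) = s.filter (fun k => k < i) := by
  ext k
  simp only [Finset.mem_filter, Finset.mem_erase]
  constructor
  · rintro ⟨⟨_, h1⟩, h2⟩; exact ⟨h1, h2⟩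
  · rintro ⟨h1, h2⟩; exact ⟨⟨fun e => h (e ▸ h2), h1⟩, h2⟩

lemma sgn_erase_of_not_lt {i j : Fin m} (h : ¬ j < i) (s : Finset (Fin m)) :
    sgn K i (s.erase j) = sgn K i s := by
  unfold sgn
  rw [filter_erase_eq h]

lemma sgn_erase_of_lt {i j : Fin m} (h : j < i) {s : Finset (Fin m)} (hj : j ∈ s) :
    sgn K i (s.erase j) = - sgn K i s := by
  conv_rhs => rw [← Finset.insert_erase hj]
  rw [sgn_insert_of_lt h (Finset.notMem_erase j s), neg_neg]

variable (b : Module.Basis (Fin m) K V) (Q : QuadraticForm K V)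

/-- action of the `i`-th generator on a basis vector of `Finset (Fin m) →₀ K` -/
def dd (i : Fin m) (s : Finset (Fin m)) : Finset (Fin m) →₀ K :=
  if i ∈ s then (sgn K i s * Q (b i)) • Finsupp.single (s.erase i) 1
  else sgn K i s • Finsupp.single (insert i s) 1

/-- action of the `i`-th generator -/
def LL (i : Fin m) : Module.End K (Finset (Fin m) →₀ K) :=
  Finsupp.linearCombination K (dd b Q i)

lemma LL_single (i : Fin m) (s : Finset (Fin m)) :
    LL b Q i (Finsupp.single s 1) = dd b Q i s := by
  simp [LL, Finsupp.linearCombination_single]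

lemma erase_erase_comm (a c : Fin m) (s : Finset (Fin m)) :
    (s.erase a).erase c = (s.erase c).erase a := by
  ext k; simp only [Finset.mem_erase]; tauto

lemma key_anticomm {i j : Fin m} (h : j < i) (s : Finset (Fin m)) :
    LL b Q i (LL b Q j (Finsupp.single s 1)) + LL b Q j (LL b Q i (Finsupp.single s 1)) = 0 := by
  have hij : i ≠ j := h.ne'
  have hji : j ≠ i := h.ne
  have hnl : ¬ i < j := asymm h
  by_cases hi : i ∈ s <;> by_cases hj : j ∈ s
  · rw [LL_single, dd, if_pos hj, map_smul, LL_single, dd,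
      if_pos (Finset.mem_erase.2 ⟨hij, hi⟩),
      LL_single, dd, if_pos hi, map_smul, LL_single, dd,
      if_pos (Finset.mem_erase.2 ⟨hji, hj⟩),
      sgn_erase_of_lt h hj, sgn_erase_of_not_lt hnl,
      erase_erase_comm j i s, smul_smul, smul_smul, ← add_smul,
      show sgn K j s * Q (b j) * (-sgn K i s * Q (b i)) +
        sgn K i s * Q (b i) * (sgn K j s * Q (b j)) = 0 by ring, zero_smul]
  · rw [LL_single, dd, if_neg hj, map_smul, LL_single, dd,
      if_pos (Finset.mem_insert.2 (Or.inr hi)),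
      LL_single, dd, if_pos hi, map_smul, LL_single, dd,
      if_neg (fun hc => hj (Finset.mem_of_mem_erase hc)),
      sgn_insert_of_lt h hj, sgn_erase_of_not_lt hnl,
      Finset.erase_insert_of_ne hji, smul_smul, smul_smul, ← add_smul,
      show sgn K j s * (-sgn K i s * Q (b i)) +
        sgn K i s * Q (b i) * sgn K j s = 0 by ring, zero_smul]
  · rw [LL_single, dd, if_pos hj, map_smul, LL_single, dd,
      if_neg (fun hc => hi (Finset.mem_of_mem_erase hc)),
      LL_single, dd, if_neg hi, map_smul, LL_single, dd,
      if_pos (Finset.mem_insert.2 (Or.inr hj)),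
      sgn_erase_of_lt h hj, sgn_insert_of_not_lt hnl,
      Finset.erase_insert_of_ne hij, smul_smul, smul_smul, ← add_smul,
      show sgn K j s * Q (b j) * -sgn K i s +
        sgn K i s * (sgn K j s * Q (b j)) = 0 by ring, zero_smul]
  · rw [LL_single, dd, if_neg hj, map_smul, LL_single, dd,
      if_neg (fun hc => (Finset.mem_insert.1 hc).elim hij (fun hc' => hi hc')),
      LL_single, dd, if_neg hi, map_smul, LL_single, dd,
      if_neg (fun hc => (Finset.mem_insert.1 hc).elim hji (fun hc' => hj hc')),
      sgn_insert_of_lt h hj, sgn_insert_of_not_lt hnl,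
      Finset.insert_comm, smul_smul, smul_smul, ← add_smul,
      show sgn K j s * -sgn K i s + sgn K i s * sgn K j s = 0 by ring, zero_smul]

lemma LL_anticomm {i j : Fin m} (hij : i ≠ j) :
    LL b Q i * LL b Q j + LL b Q j * LL b Q i = 0 := by
  have main : ∀ {i j : Fin m}, j < i →
      LL b Q i * LL b Q j + LL b Q j * LL b Q i = 0 := by
    intro i j h
    apply Finsupp.lhom_ext
    intro s c
    have h1 : (Finsupp.single s c : Finset (Fin m) →₀ K) = c • Finsupp.single s 1 := by
      simp [Finsupp.smul_single]
    simp only [LinearMap.add_apply, Module.End.mul_apply, LinearMap.zero_apply, h1,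
      map_smul, ← smul_add]
    rw [key_anticomm b Q h s, smul_zero]
  rcases hij.lt_or_gt with h | h
  · rw [add_comm]; exact main h
  · exact main h

lemma LL_sq (i : Fin m) :
    LL b Q i * LL b Q i = Q (b i) • (1 : Module.End K (Finset (Fin m) →₀ K)) := by
  apply Finsupp.lhom_ext
  intro s c
  have h1 : (Finsupp.single s c : Finset (Fin m) →₀ K) = c • Finsupp.single s 1 := by
    simp [Finsupp.smul_single]
  have hii : ¬ i < i := lt_irrefl i
  simp only [Module.End.mul_apply, h1, map_smul, LinearMap.smul_apply, Module.End.one_apply]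
  congr 1
  by_cases hi : i ∈ s
  · rw [LL_single, dd, if_pos hi, map_smul, LL_single, dd,
      if_neg (Finset.notMem_erase i s), sgn_erase_of_not_lt hii,
      Finset.insert_erase hi, smul_smul,
      show sgn K i s * Q (b i) * sgn K i s = Q (b i) * (sgn K i s * sgn K i s) by ring,
      sgn_mul_self, mul_one]
  · rw [LL_single, dd, if_neg hi, map_smul, LL_single, dd,
      if_pos (Finset.mem_insert_self i s), sgn_insert_of_not_lt hii,
      Finset.erase_insert hi, smul_smul,
      show sgn K i s * (sgn K i s * Q (b i)) = Q (b i) * (sgn K i s * sgn K i s) by ring,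
      sgn_mul_self, mul_one]

/-- the representation map on `V` -/
def rho : V →ₗ[K] Module.End K (Finset (Fin m) →₀ K) where
  toFun v := ∑ i, b.repr v i • LL b Q i
  map_add' x y := by
    simp [map_add, Finsupp.add_apply, add_smul, Finset.sum_add_distrib]
  map_smul' c x := by
    simp [Finsupp.smul_apply, smul_smul, Finset.smul_sum]

lemma rho_basis (i : Fin m) : rho b Q (b i) = LL b Q i := by
  simp only [rho, LinearMap.coe_mk, AddHom.coe_mk, Module.Basis.repr_self]
  rw [Finset.sum_eq_single i]
  · simp
  · intro j _ hj
    rw [Finsupp.single_apply, if_neg (Ne.symm hj), zero_smul]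
  · intro hmem; exact absurd (Finset.mem_univ i) hmem

lemma rho_sq (horth : ∀ i j : Fin m, i ≠ j → QuadraticMap.polar Q (b i) (b j) = 0)
    (v : V) : rho b Q v * rho b Q v = algebraMap K _ (Q v) := by
  classical
  set c : Fin m → K := fun i => b.repr v i with hc
  have expand : rho b Q v * rho b Q v =
      ∑ p ∈ (Finset.univ ×ˢ Finset.univ : Finset (Fin m × Fin m)),
        (c p.1 * c p.2) • (LL b Q p.1 * LL b Q p.2) := by
    show (∑ i, c i • LL b Q i) * (∑ j, c j • LL b Q j) = _
    rw [Finset.sum_mul_sum, ← Finset.sum_product']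
    refine Finset.sum_congr rfl fun p _ => ?_
    rw [smul_mul_smul_comm]
  rw [expand, ← Finset.diag_union_offDiag,
    Finset.sum_union (Finset.disjoint_diag_offDiag _)]
  have hoff : ∑ p ∈ (Finset.univ : Finset (Fin m)).offDiag,
      (c p.1 * c p.2) • (LL b Q p.1 * LL b Q p.2) = 0 := by
    refine Finset.sum_involution (fun p _ => p.swap) ?_ ?_ ?_ ?_
    · intro p hp
      have hne : p.1 ≠ p.2 := (Finset.mem_offDiag.1 hp).2.2
      show (c p.1 * c p.2) • (LL b Q p.1 * LL b Q p.2) +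
        (c p.2 * c p.1) • (LL b Q p.2 * LL b Q p.1) = 0
      rw [mul_comm (c p.2) (c p.1), ← smul_add, LL_anticomm b Q hne, smul_zero]
    · intro p hp _
      have hne : p.1 ≠ p.2 := (Finset.mem_offDiag.1 hp).2.2
      intro hsw
      exact hne (congrArg Prod.snd hsw)
    · intro p hp
      have h := Finset.mem_offDiag.1 hp
      exact Finset.mem_offDiag.2 ⟨h.2.1, h.1, h.2.2.symm⟩
    · intro p _; rfl
  rw [hoff, add_zero, Finset.sum_diag]
  have hdiag : ∀ i : Fin m, (c i * c i) • (LL b Q i * LL b Q i) =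
      (c i * c i * Q (b i)) • (1 : Module.End K (Finset (Fin m) →₀ K)) := by
    intro i; rw [LL_sq, smul_smul]
  simp_rw [hdiag]
  rw [← Finset.sum_smul, Algebra.algebraMap_eq_smul_one]
  congr 1
  conv_rhs => rw [← Module.Basis.sum_repr b v]
  rw [QuadraticMap.map_sum]
  have hpolar : ∑ ij ∈ (Finset.univ : Finset (Fin m)).sym2 with ¬ ij.IsDiag,
      Sym2.lift ⟨fun i j => QuadraticMap.polar Q (c i • b i) (c j • b j),
        fun _ _ => QuadraticMap.polar_comm _ _ _⟩ ij = 0 := by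
    refine Finset.sum_eq_zero ?_
    intro ij hij
    rw [Finset.mem_filter] at hij
    induction ij using Sym2.ind with
    | _ x y =>
      have hxy : x ≠ y := by
        intro hcontra
        exact hij.2 (by simp [hcontra])
      rw [Sym2.lift_mk]
      simp only
      rw [QuadraticMap.polar_smul_left, QuadraticMap.polar_smul_right,
        horth x y hxy, smul_zero, smul_zero]
  rw [show ∑ ij ∈ (Finset.univ : Finset (Fin m)).sym2 with ¬ ij.IsDiag,
      QuadraticMap.polarSym2 Q (Sym2.map (fun i => b.repr v i • b i) ij) = 0 by
    rw [← hpolar]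
    refine Finset.sum_congr rfl fun ij _ => ?_
    induction ij using Sym2.ind
    rfl, add_zero]
  refine Finset.sum_congr rfl fun i _ => ?_
  rw [QuadraticMap.map_smul, smul_eq_mul]

/-- ordered product of generators indexed by a finset -/
def pf (s : Finset (Fin m)) : CliffordAlgebra Q :=
  ((s.sort (· ≤ ·)).map fun i => ι Q (b i)).prod

lemma pf_empty : pf b Q ∅ = 1 := by simp [pf]

lemma pf_insert {i : Fin m} {t : Finset (Fin m)} (h : ∀ k ∈ t, i < k) :
    pf b Q (insert i t) = ι Q (b i) * pf b Q t := by
  have hi : i ∉ t := fun hm => lt_irrefl i (h i hm)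
  rw [pf, Finset.sort_insert (· ≤ ·) (fun k hk => (h k hk).le) hi, List.map_cons,
    List.prod_cons]
  rfl

section rep

variable (horth : ∀ i j : Fin m, i ≠ j → QuadraticMap.polar Q (b i) (b j) = 0)
include horth

/-- the representation of the Clifford algebra -/
def rhoHat : CliffordAlgebra Q →ₐ[K] Module.End K (Finset (Fin m) →₀ K) :=
  CliffordAlgebra.lift Q ⟨rho b Q, rho_sq b Q horth⟩

lemma rhoHat_word (l : List (Fin m)) (hs : l.Pairwise (· ≤ ·)) (hn : l.Nodup) :
    rhoHat b Q horth ((l.map fun i => ι Q (b i)).prod) (Finsupp.single ∅ 1)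
      = Finsupp.single l.toFinset (1 : K) := by
  induction l with
  | nil => simp
  | cons i l ih =>
    have hs' : l.Pairwise (· ≤ ·) := (List.pairwise_cons.1 hs).2
    have hle : ∀ k ∈ l, i ≤ k := (List.pairwise_cons.1 hs).1
    have hn' : l.Nodup := (List.nodup_cons.1 hn).2
    have hni : i ∉ l := (List.nodup_cons.1 hn).1
    rw [List.map_cons, List.prod_cons, map_mul, Module.End.mul_apply, ih hs' hn']
    have h1 : rhoHat b Q horth (ι Q (b i)) = LL b Q i := by
      rw [rhoHat, CliffordAlgebra.lift_ι_apply, rho_basis]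
    rw [h1, LL_single, dd, if_neg (by simpa using hni)]
    have hsgn : sgn K i l.toFinset = 1 := by
      unfold sgn
      rw [Finset.filter_eq_empty_iff.2 (fun {k} hk => not_lt.2 (hle k (by simpa using hk)))]
      simp
    rw [hsgn, one_smul, List.toFinset_cons]

lemma rhoHat_pf (s : Finset (Fin m)) :
    rhoHat b Q horth (pf b Q s) (Finsupp.single ∅ 1) = Finsupp.single s (1 : K) := by
  have := rhoHat_word b Q horth (s.sort (· ≤ ·)) (Finset.pairwise_sort _ _)
    (Finset.sort_nodup _ _)
  rwa [Finset.sort_toFinset] at this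

lemma pf_linearIndependent : LinearIndependent K (pf b Q) := by
  let ev : CliffordAlgebra Q →ₗ[K] (Finset (Fin m) →₀ K) :=
    { toFun := fun x => rhoHat b Q horth x (Finsupp.single ∅ 1)
      map_add' := fun x y => by simp [map_add]
      map_smul' := fun c x => by simp [map_smul] }
  apply LinearIndependent.of_comp ev
  have hcomp : (ev ∘ pf b Q) = fun s => Finsupp.single s (1 : K) :=
    funext fun s => rhoHat_pf b Q horth s
  rw [hcomp]
  simpa [Finsupp.coe_basisSingleOne] using
    (Finsupp.basisSingleOne (R := K) (ι := Finset (Fin m))).linearIndependent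

lemma key_span : ∀ n (t : Finset (Fin m)), t.card ≤ n → ∀ i : Fin m,
    ι Q (b i) * pf b Q t ∈
      Submodule.span K (pf b Q '' {u : Finset (Fin m) | u ⊆ insert i t}) := by
  intro n
  induction n with
  | zero =>
    intro t ht i
    rw [Nat.le_zero, Finset.card_eq_zero] at ht
    subst ht
    rw [pf_empty, mul_one, show ι Q (b i) = pf b Q {i} by
      rw [show ({i} : Finset (Fin m)) = insert i ∅ from rfl,
        pf_insert b Q (by simp), pf_empty, mul_one]]
    exact Submodule.subset_span ⟨{i}, by simp, rfl⟩
  | succ n ihn =>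
    intro t ht i
    rcases Finset.eq_empty_or_nonempty t with rfl | htne
    · rw [pf_empty, mul_one, show ι Q (b i) = pf b Q {i} by
        rw [show ({i} : Finset (Fin m)) = insert i ∅ from rfl,
          pf_insert b Q (by simp), pf_empty, mul_one]]
      exact Submodule.subset_span ⟨{i}, by simp, rfl⟩
    set j := t.min' htne with hj
    have hjt : j ∈ t := t.min'_mem htne
    have hjmin : ∀ k ∈ t, j ≤ k := fun k hk => t.min'_le k hk
    have hterase : ∀ k ∈ t.erase j, j < k := fun k hk =>
      lt_of_le_of_ne (hjmin k (Finset.mem_of_mem_erase hk))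
        (Ne.symm (Finset.ne_of_mem_erase hk))
    have hpft : pf b Q t = ι Q (b j) * pf b Q (t.erase j) := by
      conv_lhs => rw [← Finset.insert_erase hjt]
      exact pf_insert b Q hterase
    rcases lt_trichotomy i j with hij | hij | hij
    · -- i < j: i below everything in t
      have hlt : ∀ k ∈ t, i < k := fun k hk => lt_of_lt_of_le hij (hjmin k hk)
      rw [← pf_insert b Q hlt]
      exact Submodule.subset_span ⟨insert i t, Set.mem_setOf.2 (subset_refl _), rfl⟩
    · -- i = j
      rw [hij, hpft, ← mul_assoc, CliffordAlgebra.ι_sq_scalar, ← Algebra.smul_def]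
      exact Submodule.smul_mem _ _ (Submodule.subset_span
        ⟨t.erase j, Set.mem_setOf.2 (fun x hx =>
          Finset.mem_insert.2 (Or.inr (Finset.mem_of_mem_erase hx))), rfl⟩)
    · -- j < i
      have hcard : (t.erase j).card ≤ n := by
        have := Finset.card_erase_of_mem hjt
        omega
      have hanti : ι Q (b i) * ι Q (b j) = -(ι Q (b j) * ι Q (b i)) := by
        have h0 := CliffordAlgebra.ι_mul_ι_add_swap (Q := Q) (b i) (b j)
        rw [horth i j hij.ne', map_zero] at h0
        exact eq_neg_of_add_eq_zero_left h0
      have hIH := ihn (t.erase j) hcard i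
      have hmul : ∀ x ∈ Submodule.span K
          (pf b Q '' {u : Finset (Fin m) | u ⊆ insert i (t.erase j)}),
          ι Q (b j) * x ∈
            Submodule.span K (pf b Q '' {u : Finset (Fin m) | u ⊆ insert i t}) := by
        intro x hx
        induction hx using Submodule.span_induction with
        | mem y hy =>
          obtain ⟨u, hu, rfl⟩ := hy
          have hju : ∀ k ∈ u, j < k := by
            intro k hk
            rcases Finset.mem_insert.1 (hu hk) with rfl | hk'
            · exact hij
            · exact hterase k hk'
          rw [← pf_insert b Q hju]
          refine Submodule.subset_span ⟨insert j u, ?_, rfl⟩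
          intro x hx
          rcases Finset.mem_insert.1 hx with rfl | hx'
          · exact Finset.mem_insert.2 (Or.inr hjt)
          · rcases Finset.mem_insert.1 (hu hx') with rfl | hx''
            · exact Finset.mem_insert_self _ _
            · exact Finset.mem_insert.2 (Or.inr (Finset.mem_of_mem_erase hx''))
        | zero => rw [mul_zero]; exact Submodule.zero_mem _
        | add y z _ _ hy hz => rw [mul_add]; exact Submodule.add_mem _ hy hz
        | smul c y _ hy => rw [mul_smul_comm]; exact Submodule.smul_mem _ _ hy
      have : ι Q (b i) * pf b Q t = -(ι Q (b j) * (ι Q (b i) * pf b Q (t.erase j))) := by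
        rw [hpft, ← mul_assoc, hanti, neg_mul, mul_assoc]
      rw [this]
      exact Submodule.neg_mem _ (hmul _ hIH)

lemma word_mem (l : List (Fin m)) :
    (l.map fun i => ι Q (b i)).prod ∈ Submodule.span K (Set.range (pf b Q)) := by
  induction l with
  | nil =>
    rw [List.map_nil, List.prod_nil, ← pf_empty b Q]
    exact Submodule.subset_span ⟨∅, rfl⟩
  | cons i l ih =>
    rw [List.map_cons, List.prod_cons]
    generalize (List.map (fun i => ι Q (b i)) l).prod = y at ih
    induction ih using Submodule.span_induction with
    | mem y hy =>
      obtain ⟨t, rfl⟩ := hy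
      have h := key_span b Q horth t.card t le_rfl i
      refine Submodule.span_mono ?_ h
      rintro x ⟨u, _, rfl⟩
      exact ⟨u, rfl⟩
    | zero => rw [mul_zero]; exact Submodule.zero_mem _
    | add y z _ _ hy hz => rw [mul_add]; exact Submodule.add_mem _ hy hz
    | smul c y _ hy => rw [mul_smul_comm]; exact Submodule.smul_mem _ _ hy

lemma top_le_span : ⊤ ≤ Submodule.span K (Set.range (pf b Q)) := by
  have hW : Submodule.span K
      {x : CliffordAlgebra Q | ∃ l : List (Fin m), (l.map fun i => ι Q (b i)).prod = x} ≤
      Submodule.span K (Set.range (pf b Q)) := by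
    rw [Submodule.span_le]
    rintro y ⟨l, rfl⟩
    exact word_mem b Q horth l
  have hall : ∀ x : CliffordAlgebra Q, x ∈ Submodule.span K
      {x : CliffordAlgebra Q | ∃ l : List (Fin m), (l.map fun i => ι Q (b i)).prod = x} := by
    intro x
    induction x using CliffordAlgebra.induction with
    | algebraMap r =>
      rw [Algebra.algebraMap_eq_smul_one]
      exact Submodule.smul_mem _ _ (Submodule.subset_span ⟨[], by simp⟩)
    | ι v =>
      have hv : v ∈ Submodule.span K (Set.range b) := by
        rw [b.span_eq]; exact Submodule.mem_top
      have : ι Q v ∈ Submodule.map (ι Q) (Submodule.span K (Set.range b)) :=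
        Submodule.mem_map_of_mem hv
      rw [Submodule.map_span] at this
      refine Submodule.span_le.2 ?_ this
      rintro y ⟨_, ⟨i, rfl⟩, rfl⟩
      exact Submodule.subset_span ⟨[i], by simp⟩
    | mul x y hx hy =>
      clear hW
      induction hx using Submodule.span_induction with
      | mem x' hx' =>
        induction hy using Submodule.span_induction with
        | mem y' hy' =>
          obtain ⟨l1, rfl⟩ := hx'
          obtain ⟨l2, rfl⟩ := hy'
          refine Submodule.subset_span ⟨l1 ++ l2, ?_⟩
          rw [List.map_append, List.prod_append]
        | zero => rw [mul_zero]; exact Submodule.zero_mem _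
        | add y z _ _ hy hz => rw [mul_add]; exact Submodule.add_mem _ hy hz
        | smul c y _ hy => rw [mul_smul_comm]; exact Submodule.smul_mem _ _ hy
      | zero => rw [zero_mul]; exact Submodule.zero_mem _
      | add x1 x2 _ _ h1 h2 => rw [add_mul]; exact Submodule.add_mem _ h1 h2
      | smul c x1 _ h1 => rw [smul_mul_assoc]; exact Submodule.smul_mem _ _ h1
    | add x y hx hy => exact Submodule.add_mem _ hx hy
  intro x _
  exact hW (hall x)

/-- the basis of the Clifford algebra -/
def cliffordBasis : Module.Basis (Finset (Fin m)) K (CliffordAlgebra Q) :=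
  Module.Basis.mk (pf_linearIndependent b Q horth) (top_le_span b Q horth)

lemma cliffordBasis_apply (s : Finset (Fin m)) :
    cliffordBasis b Q horth s = pf b Q s := Module.Basis.mk_apply _ _ _

end rep

end CliffAux

theorem stmt3 (K : Type) [Field K] (h2 : (2 : K) ≠ 0)
    (V : Type) [AddCommGroup V] [Module K V]
    (m : ℕ) (b : Module.Basis (Fin m) K V) (Q : QuadraticForm K V)
    (horth : ∀ i j : Fin m, i ≠ j → QuadraticMap.polar Q (b i) (b j) = 0) :
    (∃ bc : Module.Basis (Finset (Fin m)) K (CliffordAlgebra Q),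
        ∀ s : Finset (Fin m),
          bc s = ((s.sort (· ≤ ·)).map fun i => CliffordAlgebra.ι Q (b i)).prod) ∧
      Module.finrank K (CliffordAlgebra Q) = 2 ^ m ∧
      Module.finrank K (CliffordAlgebra Q) = Module.finrank K (ExteriorAlgebra K V) := by
  have hcard : Fintype.card (Finset (Fin m)) = 2 ^ m := by
    rw [Fintype.card_finset, Fintype.card_fin]
  have bc := CliffAux.cliffordBasis b Q horth
  have hfr : Module.finrank K (CliffordAlgebra Q) = 2 ^ m := by
    rw [Module.finrank_eq_card_basis bc, hcard]
  have horth0 : ∀ i j : Fin m, i ≠ j →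
      QuadraticMap.polar (0 : QuadraticForm K V) (b i) (b j) = 0 := by
    intro i j _
    simp [QuadraticMap.polar]
  have bc0 := CliffAux.cliffordBasis b (0 : QuadraticForm K V) horth0
  have hfr0 : Module.finrank K (ExteriorAlgebra K V) = 2 ^ m := by
    rw [Module.finrank_eq_card_basis bc0, hcard]
  exact ⟨⟨CliffAux.cliffordBasis b Q horth, fun s =>
    (CliffAux.cliffordBasis_apply b Q horth s).trans rfl⟩, hfr, by rw [hfr, hfr0]⟩
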